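/- In the F^α-scheme, P(M_n > X_n and M_{n+1} = X_{n+1}) = (α_{n+1}/A_{n+1}) · (A_{n-1}/A_n) for each n ≥ 2. -/

import Mathlib

open MeasureTheory Filter Set
open scoped ENNReal

private lemma rpow_finset_sum {x : ℝ} (hx : 0 ≤ x) {ι : Type*} (s : Finset ι) (e : ι → ℝ)
    (he : ∀ i ∈ s, 0 < e i) : x ^ (∑ i ∈ s, e i) = ∏ i ∈ s, x ^ e i := by
  classical
  induction s using Finset.induction_on with
  | empty => simp
  | @insert a s ha ih =>
    have hsum : 0 ≤ ∑ i ∈ s, e i :=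
      Finset.sum_nonneg fun i hi => (he i (Finset.mem_insert_of_mem hi)).le
    have hpos : 0 < e a := he a (Finset.mem_insert_self a s)
    rw [Finset.sum_insert ha, Finset.prod_insert ha,
      Real.rpow_add' hx (by positivity), ih fun i hi => he i (Finset.mem_insert_of_mem hi)]

private lemma measurable_finset_sup' {ι γ : Type*} [MeasurableSpace γ] (s : Finset ι)
    (hs : s.Nonempty) (f : ι → γ → ℝ) (hf : ∀ i, Measurable (f i)) :
    Measurable (fun g => s.sup' hs (fun i => f i g)) := by
  induction hs using Finset.Nonempty.cons_induction with
  | singleton a => simpa using hf a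
  | cons a s ha hs ih =>
    have : (fun g => (Finset.cons a s ha).sup' (Finset.cons_nonempty ha) fun i => f i g)
        = fun g => f a g ⊔ s.sup' hs fun i => f i g := by
      funext g; exact Finset.sup'_cons hs (fun i => f i g)
    rw [this]; exact (hf a).sup ih

private lemma sup'_attach_eq {ι : Type*} (s : Finset ι) (hs : s.Nonempty) (hs' : s.attach.Nonempty)
    (f : ι → ℝ) : s.attach.sup' hs' (fun i => f i.1) = s.sup' hs f := by
  apply le_antisymm
  · exact Finset.sup'_le _ _ fun i _ => Finset.le_sup' f i.2
  · exact Finset.sup'_le _ _ fun i hi => Finset.le_sup' (fun j : {x // x ∈ s} => f j.1)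
      (Finset.mem_attach s ⟨i, hi⟩)

private lemma core {Ω : Type*} [MeasurableSpace Ω] (μ : Measure Ω) [IsProbabilityMeasure μ]
    (F : ℝ → ℝ) (hFmono : Monotone F) (hFcont : Continuous F)
    (hFbot : Tendsto F atBot (nhds 0)) (hFtop : Tendsto F atTop (nhds 1))
    (a b c : ℝ) (ha : 0 < a) (hb : 0 < b) (hc : 0 < c)
    (Y W Z : Ω → ℝ) (hYm : Measurable Y) (hWm : Measurable W) (hZm : Measurable Z)
    (hY : ∀ x, μ {ω | Y ω ≤ x} = ENNReal.ofReal (F x ^ a))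
    (hW : ∀ x, μ {ω | W ω ≤ x} = ENNReal.ofReal (F x ^ b))
    (hZ : ∀ x, μ {ω | Z ω ≤ x} = ENNReal.ofReal (F x ^ c))
    (h1 : ProbabilityTheory.IndepFun Y W μ)
    (h2 : ProbabilityTheory.IndepFun (fun ω => (Y ω, W ω)) Z μ) :
    μ {ω | Y ω < W ω ∧ W ω ≤ Z ω}
      = ENNReal.ofReal ((b / (a + b)) * (c / (a + b + c))) := by
  have hF0 : ∀ x, 0 ≤ F x := fun x => hFmono.le_of_tendsto hFbot x
  have hF1 : ∀ x, F x ≤ 1 := fun x => hFmono.ge_of_tendsto hFtop x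
  set νY := μ.map Y with hνY
  set νW := μ.map W with hνW
  set νZ := μ.map Z with hνZ
  haveI : IsProbabilityMeasure νY := Measure.isProbabilityMeasure_map hYm.aemeasurable
  haveI : IsProbabilityMeasure νW := Measure.isProbabilityMeasure_map hWm.aemeasurable
  haveI : IsProbabilityMeasure νZ := Measure.isProbabilityMeasure_map hZm.aemeasurable
  -- cdf facts for the mapped measures
  have hIic : ∀ (V : Ω → ℝ) (hVm : Measurable V) (d : ℝ),
      (∀ x, μ {ω | V ω ≤ x} = ENNReal.ofReal (F x ^ d)) →
      ∀ x, (μ.map V) (Iic x) = ENNReal.ofReal (F x ^ d) := by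
    intro V hVm d hV x
    rw [Measure.map_apply hVm measurableSet_Iic]
    exact hV x
  have hIio : ∀ (V : Ω → ℝ) (hVm : Measurable V) (d : ℝ), 0 < d →
      (∀ x, μ {ω | V ω ≤ x} = ENNReal.ofReal (F x ^ d)) →
      ∀ x, (μ.map V) (Iio x) = ENNReal.ofReal (F x ^ d) := by
    intro V hVm d hd hV x
    have hU : Iio x = ⋃ k : ℕ, Iic (x - 1 / (k + 1)) := by
      ext y
      simp only [mem_Iio, mem_iUnion, mem_Iic]
      constructor
      · intro hy
        obtain ⟨k, hk⟩ := exists_nat_one_div_lt (sub_pos.mpr hy)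
        exact ⟨k, by linarith⟩
      · rintro ⟨k, hk⟩
        have : (0:ℝ) < 1 / (k + 1) := by positivity
        linarith
    have hmono : Monotone fun k : ℕ => Iic (x - 1 / (k + 1 : ℝ)) := by
      intro k l hkl
      apply Iic_subset_Iic.mpr
      have : (1 : ℝ) / (l + 1) ≤ 1 / (k + 1) := by
        apply one_div_le_one_div_of_le (by positivity)
        exact_mod_cast by omega
      linarith
    have ht1 : Tendsto (fun k : ℕ => x - 1 / (k + 1 : ℝ)) atTop (nhds x) := by
      have := tendsto_const_nhds (x := x) (f := atTop (α := ℕ)) |>.sub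
        tendsto_one_div_add_atTop_nhds_zero_nat
      simpa using this
    have hcont : ContinuousAt (fun t : ℝ => ENNReal.ofReal (F t ^ d)) x := by
      apply ENNReal.continuous_ofReal.continuousAt.comp
      exact (Real.continuousAt_rpow_const (F x) d (Or.inr hd.le)).comp hFcont.continuousAt
    have h2' : Tendsto (fun k : ℕ => (μ.map V) (Iic (x - 1 / (k + 1)))) atTop
        (nhds ((μ.map V) (Iio x))) := by
      rw [hU]
      exact tendsto_measure_iUnion_atTop hmono
    have h3' : Tendsto (fun k : ℕ => (μ.map V) (Iic (x - 1 / (k + 1)))) atTop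
        (nhds (ENNReal.ofReal (F x ^ d))) := by
      have : (fun k : ℕ => (μ.map V) (Iic (x - 1 / (k + 1))))
          = fun k : ℕ => ENNReal.ofReal (F (x - 1 / (k + 1)) ^ d) := by
        funext k; exact hIic V hVm d hV _
      rw [this]
      exact hcont.tendsto.comp ht1
    exact tendsto_nhds_unique h2' h3'
  -- Reduce to a product measure computation
  have hpairm : Measurable fun ω => (Y ω, W ω) := hYm.prodMk hWm
  have htriplem : Measurable fun ω => ((Y ω, W ω), Z ω) := hpairm.prodMk hZm
  set S : Set ((ℝ × ℝ) × ℝ) := {p | p.1.1 < p.1.2 ∧ p.1.2 ≤ p.2} with hS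
  have hSm : MeasurableSet S :=
    (measurableSet_lt (measurable_fst.fst) (measurable_fst.snd)).inter
      (measurableSet_le (measurable_fst.snd) measurable_snd)
  have hE : {ω | Y ω < W ω ∧ W ω ≤ Z ω} = (fun ω => ((Y ω, W ω), Z ω)) ⁻¹' S := rfl
  have hmap2 : μ.map (fun ω => ((Y ω, W ω), Z ω)) = (νY.prod νW).prod νZ := by
    rw [(ProbabilityTheory.indepFun_iff_map_prod_eq_prod_map_map hpairm.aemeasurable
      hZm.aemeasurable).mp h2,
      (ProbabilityTheory.indepFun_iff_map_prod_eq_prod_map_map hYm.aemeasurable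
      hWm.aemeasurable).mp h1]
  have step1 : μ {ω | Y ω < W ω ∧ W ω ≤ Z ω} = ((νY.prod νW).prod νZ) S := by
    rw [hE, ← Measure.map_apply htriplem hSm, hmap2]
  -- Fubini
  have hslice : ∀ q : ℝ × ℝ, νZ (Prod.mk q ⁻¹' S)
      = Set.indicator {q : ℝ × ℝ | q.1 < q.2} (fun q => νZ (Ici q.2)) q := by
    intro q
    by_cases hq : q.1 < q.2
    · have : Prod.mk q ⁻¹' S = Ici q.2 := by
        ext z; simp [hS, hq, mem_Ici]
      rw [this]
      simp [Set.indicator_apply, hq]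
    · have : Prod.mk q ⁻¹' S = ∅ := by
        ext z; simp [hS, hq]
      rw [this]
      simp [Set.indicator_apply, hq]
  have hIcim : Measurable fun w : ℝ => νZ (Ici w) := by
    have : Antitone fun w : ℝ => νZ (Ici w) := fun u v huv => measure_mono (Ici_subset_Ici.mpr huv)
    exact this.measurable
  have step2 : ((νY.prod νW).prod νZ) S
      = ∫⁻ w, νZ (Ici w) * νY (Iio w) ∂νW := by
    rw [Measure.prod_apply hSm]
    have : (fun q : ℝ × ℝ => νZ (Prod.mk q ⁻¹' S))
        = Set.indicator {q : ℝ × ℝ | q.1 < q.2} (fun q => νZ (Ici q.2)) := by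
      funext q; exact hslice q
    rw [this]
    have hm2 : Measurable fun q : ℝ × ℝ => νZ (Ici q.2) := hIcim.comp measurable_snd
    rw [lintegral_prod_symm _ (hm2.indicator
      (measurableSet_lt measurable_fst measurable_snd)).aemeasurable]
    congr 1
    funext w
    have : (fun y => Set.indicator {q : ℝ × ℝ | q.1 < q.2} (fun q => νZ (Ici q.2)) (y, w))
        = Set.indicator (Iio w) (fun _ => νZ (Ici w)) := by
      funext y
      simp [Set.indicator_apply, mem_Iio]
    rw [this, lintegral_indicator_const measurableSet_Iio]
  -- pointwise values of the integrand
  have hIciZ : ∀ w, νZ (Ici w) = ENNReal.ofReal (1 - F w ^ c) := by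
    intro w
    have h1' : νZ (Iio w) = ENNReal.ofReal (F w ^ c) := hIio Z hZm c hc hZ w
    have hcompl : Ici w = (Iio w)ᶜ := compl_Iio.symm
    rw [hcompl, measure_compl measurableSet_Iio (measure_ne_top _ _), h1', measure_univ,
      ENNReal.ofReal_sub _ (Real.rpow_nonneg (hF0 w) c), ENNReal.ofReal_one]
  have hrc_le1 : ∀ w, F w ^ c ≤ 1 := fun w => Real.rpow_le_one (hF0 w) (hF1 w) hc.le
  have step3 : ∫⁻ w, νZ (Ici w) * νY (Iio w) ∂νW
      = ∫⁻ w, ENNReal.ofReal ((1 - F w ^ c) * F w ^ a) ∂νW := by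
    apply lintegral_congr
    intro w
    rw [hIciZ w, hIio Y hYm a ha hY w,
      ← ENNReal.ofReal_mul (sub_nonneg.mpr (hrc_le1 w))]
  -- change of variables via the pushforward of νW under F
  have hφm : Measurable fun t : ℝ => ENNReal.ofReal ((1 - t ^ c) * t ^ a) := by
    apply ENNReal.measurable_ofReal.comp
    have hca : Continuous fun t : ℝ => (1 - t ^ c) * t ^ a := by
      apply Continuous.mul
      · exact continuous_const.sub (continuous_iff_continuousAt.mpr fun x =>
          Real.continuousAt_rpow_const x c (Or.inr hc.le))
      · exact continuous_iff_continuousAt.mpr fun x =>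
          Real.continuousAt_rpow_const x a (Or.inr ha.le)
    exact hca.measurable
  have step4 : ∫⁻ w, ENNReal.ofReal ((1 - F w ^ c) * F w ^ a) ∂νW
      = ∫⁻ t, ENNReal.ofReal ((1 - t ^ c) * t ^ a) ∂(νW.map F) :=
    (lintegral_map hφm hFcont.measurable).symm
  -- identify the pushforward with an explicit density measure on (0, 1]
  set dens : ℝ → ℝ≥0∞ := fun t => ENNReal.ofReal (b * Real.exp (Real.log t * (b - 1)))
    with hdens_def
  have hdensm : Measurable dens := by
    apply ENNReal.measurable_ofReal.comp
    exact (measurable_const.mul (Real.measurable_exp.comp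
      (Real.measurable_log.mul measurable_const)))
  have hdens_eq : ∀ t : ℝ, 0 < t → dens t = ENNReal.ofReal (b * t ^ (b - 1)) := by
    intro t ht
    rw [hdens_def]
    congr 1
    rw [Real.rpow_def_of_pos ht]
  set ρb : Measure ℝ := (volume.restrict (Ioc 0 1)).withDensity dens with hρb_def
  have hdensint : ∀ u : ℝ, 0 ≤ u → ∫⁻ t in Ioc (0:ℝ) u, dens t = ENNReal.ofReal (u ^ b) := by
    intro u hu
    rcases eq_or_lt_of_le hu with hu0 | hu0
    · rw [← hu0]
      simp [Real.zero_rpow hb.ne']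
    have heq : ∫⁻ t in Ioc (0:ℝ) u, dens t
        = ∫⁻ t in Ioc (0:ℝ) u, ENNReal.ofReal (b * t ^ (b - 1)) := by
      apply setLIntegral_congr_fun measurableSet_Ioc
      exact fun t ht => hdens_eq t ht.1
    rw [heq]
    have hint : IntegrableOn (fun t : ℝ => b * t ^ (b - 1)) (Ioc 0 u) volume := by
      have := (intervalIntegral.intervalIntegrable_rpow' (a := 0) (b := u) (r := b - 1)
        (by linarith)).const_mul b
      rwa [intervalIntegrable_iff_integrableOn_Ioc_of_le hu] at this
    have hnn : 0 ≤ᵐ[volume.restrict (Ioc (0:ℝ) u)] fun t : ℝ => b * t ^ (b - 1) := by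
      filter_upwards [ae_restrict_mem measurableSet_Ioc] with t ht
      exact mul_nonneg hb.le (Real.rpow_nonneg ht.1.le _)
    rw [← ofReal_integral_eq_lintegral_ofReal hint hnn]
    congr 1
    rw [← intervalIntegral.integral_of_le hu]
    rw [intervalIntegral.integral_const_mul, integral_rpow (Or.inl (by linarith))]
    have hb1 : b - 1 + 1 = b := by ring
    rw [hb1, Real.zero_rpow hb.ne']
    field_simp
    ring
  haveI : IsProbabilityMeasure (νW.map F) :=
    Measure.isProbabilityMeasure_map hFcont.measurable.aemeasurable
  haveI : IsFiniteMeasure ρb := by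
    constructor
    have : ρb univ = ∫⁻ t in Ioc (0:ℝ) 1, dens t := by
      rw [hρb_def, withDensity_apply _ MeasurableSet.univ, Measure.restrict_univ]
    rw [this, hdensint 1 zero_le_one, Real.one_rpow]
    exact ENNReal.ofReal_lt_top
  have hρb_Iic : ∀ x : ℝ, ρb (Iic x) = ∫⁻ t in Iic x ∩ Ioc 0 1, dens t := by
    intro x
    rw [hρb_def, withDensity_apply _ measurableSet_Iic,
      Measure.restrict_restrict measurableSet_Iic]
  have hkey : ∀ x : ℝ, 0 ≤ x → x < 1 → νW (F ⁻¹' Iic x) = ENNReal.ofReal (x ^ b) := by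
    intro x hx0 hx1
    by_cases hne : (F ⁻¹' Iic x).Nonempty
    · obtain ⟨x0, hx0'⟩ := (hFtop.eventually (eventually_gt_nhds hx1)).exists
      have hbdd : BddAbove (F ⁻¹' Iic x) := by
        refine ⟨x0, fun w hw => ?_⟩
        by_contra hcon
        push_neg at hcon
        exact absurd (le_trans (hFmono hcon.le) hw) (not_le.mpr hx0')
      have hcl : IsClosed (F ⁻¹' Iic x) := isClosed_Iic.preimage hFcont
      set s := sSup (F ⁻¹' Iic x) with hs
      have hsmem : s ∈ F ⁻¹' Iic x := hcl.csSup_mem hne hbdd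
      have hseq : F ⁻¹' Iic x = Iic s := by
        ext w
        constructor
        · intro hw; exact le_csSup hbdd hw
        · intro hw; exact le_trans (hFmono hw) hsmem
      have hFs_le : F s ≤ x := hsmem
      have hFs_ge : x ≤ F s := by
        by_contra hcon
        push_neg at hcon
        have hev : ∀ᶠ w in nhds s, F w < x :=
          (hFcont.continuousAt (x := s)).eventually_lt_const hcon
        have hev' : ∀ᶠ w in nhdsWithin s (Ioi s), F w < x := hev.filter_mono nhdsWithin_le_nhds
        obtain ⟨w, hw1, hw2⟩ := (hev'.and (eventually_mem_nhdsWithin)).exists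
        have : w ∈ F ⁻¹' Iic x := hw1.le
        exact absurd (le_csSup hbdd this) (not_le.mpr hw2)
      have hFs : F s = x := le_antisymm hFs_le hFs_ge
      rw [hseq, hνW, hIic W hWm b hW s, hFs]
    · rw [not_nonempty_iff_eq_empty] at hne
      have hx0' : x ≤ 0 := by
        by_contra hcon
        push_neg at hcon
        obtain ⟨w, hw⟩ := (hFbot.eventually (eventually_lt_nhds hcon)).exists
        have : w ∈ F ⁻¹' Iic x := hw.le
        rw [hne] at this
        exact this
      have hx : x = 0 := le_antisymm hx0' hx0
      rw [hne, hx]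
      simp [Real.zero_rpow hb.ne']
  have hT : νW.map F = ρb := by
    apply Measure.ext_of_Iic
    intro x
    rw [Measure.map_apply hFcont.measurable measurableSet_Iic, hρb_Iic x]
    rcases lt_or_ge x 0 with hx | hx
    · have h1' : F ⁻¹' Iic x = ∅ := by
        ext w; simp only [mem_preimage, mem_Iic, mem_empty_iff_false, iff_false, not_le]
        exact lt_of_lt_of_le hx (hF0 w)
      have h2' : Iic x ∩ Ioc (0:ℝ) 1 = ∅ := by
        ext t
        simp only [mem_inter_iff, mem_Iic, mem_Ioc, mem_empty_iff_false, iff_false]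
        rintro ⟨h1, h2, h3⟩; linarith
      rw [h1', h2']
      simp
    rcases lt_or_ge x 1 with hx1 | hx1
    · have h2' : Iic x ∩ Ioc (0:ℝ) 1 = Ioc 0 x := by
        ext t
        simp only [mem_inter_iff, mem_Iic, mem_Ioc]
        constructor
        · rintro ⟨h1', h2', h3'⟩; exact ⟨h2', h1'⟩
        · rintro ⟨h1', h2'⟩; exact ⟨h2', h1', by linarith⟩
      rw [h2', hkey x hx hx1, hdensint x hx]
    · have h1' : F ⁻¹' Iic x = univ := by
        ext w; simp only [mem_preimage, mem_Iic, mem_univ, iff_true]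
        exact le_trans (hF1 w) hx1
      have h2' : Iic x ∩ Ioc (0:ℝ) 1 = Ioc 0 1 := by
        apply inter_eq_self_of_subset_right
        intro t ht; exact le_trans ht.2 hx1
      rw [h1', h2', hdensint 1 zero_le_one, Real.one_rpow, measure_univ, ENNReal.ofReal_one]
  have hfinal : ∫⁻ t, ENNReal.ofReal ((1 - t ^ c) * t ^ a) ∂ρb
      = ENNReal.ofReal (b * (1 / (a + b) - 1 / (a + b + c))) := by
    rw [hρb_def, lintegral_withDensity_eq_lintegral_mul _ hdensm hφm]
    have hcongr : ∀ᵐ t ∂(volume.restrict (Ioc (0:ℝ) 1)),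
        (dens * fun t => ENNReal.ofReal ((1 - t ^ c) * t ^ a)) t
        = ENNReal.ofReal (b * (t ^ (a + b - 1) - t ^ (a + b + c - 1))) := by
      filter_upwards [ae_restrict_mem measurableSet_Ioc] with t ht
      have ht0 := ht.1
      rw [Pi.mul_apply, hdens_eq t ht0,
        ← ENNReal.ofReal_mul (mul_nonneg hb.le (Real.rpow_nonneg ht0.le _))]
      congr 1
      have e1 : t ^ (b - 1) * t ^ a = t ^ (a + b - 1) := by
        rw [← Real.rpow_add ht0]; ring_nf
      have e2 : t ^ (b - 1) * t ^ a * t ^ c = t ^ (a + b + c - 1) := by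
        rw [← Real.rpow_add ht0, ← Real.rpow_add ht0]; ring_nf
      linear_combination b * e1 - b * e2
    rw [lintegral_congr_ae hcongr]
    have hint : IntegrableOn (fun t : ℝ => b * (t ^ (a + b - 1) - t ^ (a + b + c - 1)))
        (Ioc 0 1) volume := by
      have h1' := intervalIntegral.intervalIntegrable_rpow' (a := 0) (b := 1)
        (r := a + b - 1) (by linarith)
      have h2' := intervalIntegral.intervalIntegrable_rpow' (a := 0) (b := 1)
        (r := a + b + c - 1) (by linarith)
      have := (h1'.sub h2').const_mul b
      rwa [intervalIntegrable_iff_integrableOn_Ioc_of_le zero_le_one] at this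
    have hnn : 0 ≤ᵐ[volume.restrict (Ioc (0:ℝ) 1)]
        fun t : ℝ => b * (t ^ (a + b - 1) - t ^ (a + b + c - 1)) := by
      filter_upwards [ae_restrict_mem measurableSet_Ioc] with t ht
      have h1' : t ^ (a + b + c - 1) ≤ t ^ (a + b - 1) :=
        Real.rpow_le_rpow_of_exponent_ge ht.1 ht.2 (by linarith)
      exact mul_nonneg hb.le (sub_nonneg.mpr h1')
    rw [← ofReal_integral_eq_lintegral_ofReal hint hnn]
    congr 1
    rw [← intervalIntegral.integral_of_le zero_le_one,
      intervalIntegral.integral_const_mul,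
      intervalIntegral.integral_sub
        (intervalIntegral.intervalIntegrable_rpow' (by linarith))
        (intervalIntegral.intervalIntegrable_rpow' (by linarith)),
      integral_rpow (Or.inl (by linarith)), integral_rpow (Or.inl (by linarith))]
    have k1 : a + b - 1 + 1 = a + b := by ring
    have k2 : a + b + c - 1 + 1 = a + b + c := by ring
    rw [k1, k2, Real.zero_rpow (by positivity : (a + b) ≠ 0),
      Real.zero_rpow (by positivity : (a + b + c) ≠ 0)]
    simp only [Real.one_rpow]
    ring
  rw [step1, step2, step3, step4, hT, hfinal]
  congr 1
  have hab : a + b ≠ 0 := by positivity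
  have habc : a + b + c ≠ 0 := by positivity
  field_simp
  ring




theorem stmt17 {Ω : Type*} [MeasurableSpace Ω] (μ : Measure Ω) [IsProbabilityMeasure μ]
    (F : ℝ → ℝ) (hFmono : Monotone F) (hFcont : Continuous F)
    (hFbot : Tendsto F atBot (nhds 0)) (hFtop : Tendsto F atTop (nhds 1))
    (α : ℕ → ℝ) (hαpos : ∀ i, 0 < α i) (hα1 : α 0 = 1)
    (X : ℕ → Ω → ℝ) (hXmeas : ∀ i, Measurable (X i))
    (hindep : ProbabilityTheory.iIndepFun X μ)
    (hlaw : ∀ i x, μ {ω | X i ω ≤ x} = ENNReal.ofReal (F x ^ α i))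
    -- `M n` is the partial maximum of the first `n + 1` observations
    (M : ℕ → Ω → ℝ)
    (hMdef : ∀ n ω, M n ω = (Finset.range (n + 1)).sup' Finset.nonempty_range_add_one
      fun i => X i ω)
    (n : ℕ) (hn : 1 ≤ n) :
    μ {ω | X n ω < M n ω ∧ M (n + 1) ω = X (n + 1) ω}
      = ENNReal.ofReal ((α (n + 1) / ∑ i ∈ Finset.range (n + 2), α i)
          * ((∑ i ∈ Finset.range n, α i) / ∑ i ∈ Finset.range (n + 1), α i)) := by
  have hF0 : ∀ x, 0 ≤ F x := fun x => hFmono.le_of_tendsto hFbot x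
  have hne : (Finset.range n).Nonempty := ⟨0, Finset.mem_range.mpr (by omega)⟩
  set W : Ω → ℝ := fun ω => (Finset.range n).sup' hne (fun i => X i ω) with hWdef
  have hsplit : ∀ (k : ℕ) (hk : (Finset.range k).Nonempty) (f : ℕ → ℝ),
      (Finset.range (k + 1)).sup' Finset.nonempty_range_add_one f
        = (Finset.range k).sup' hk f ⊔ f k := by
    intro k hk f
    apply le_antisymm
    · apply Finset.sup'_le
      intro i hi
      rcases Nat.lt_succ_iff_lt_or_eq.mp (Finset.mem_range.mp hi) with h | h
      · exact le_trans (Finset.le_sup' f (Finset.mem_range.mpr h)) le_sup_left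
      · subst h; exact le_sup_right
    · apply sup_le
      · apply Finset.sup'_le
        intro i hi
        exact Finset.le_sup' f
          (Finset.mem_range.mpr (lt_trans (Finset.mem_range.mp hi) (Nat.lt_succ_self k)))
      · exact Finset.le_sup' f (Finset.self_mem_range_succ k)
  have hM_n : ∀ ω, M n ω = W ω ⊔ X n ω := by
    intro ω; rw [hMdef n ω]; exact hsplit n hne _
  have hM_n1 : ∀ ω, M (n + 1) ω = M n ω ⊔ X (n + 1) ω := by
    intro ω; rw [hMdef (n + 1) ω, hMdef n ω]
    exact hsplit (n + 1) Finset.nonempty_range_add_one _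
  have hevent : {ω | X n ω < M n ω ∧ M (n + 1) ω = X (n + 1) ω}
      = {ω | X n ω < W ω ∧ W ω ≤ X (n + 1) ω} := by
    ext ω
    simp only [Set.mem_setOf_eq, hM_n1, hM_n, sup_eq_right]
    constructor
    · rintro ⟨h1, h2⟩
      rw [lt_sup_iff] at h1
      exact ⟨h1.resolve_right (lt_irrefl _), (sup_le_iff.mp h2).1⟩
    · rintro ⟨h1, h2⟩
      exact ⟨lt_sup_iff.mpr (Or.inl h1), sup_le_iff.mpr ⟨h2, h1.le.trans h2⟩⟩
  have hsum_pos : ∀ s : Finset ℕ, s.Nonempty → 0 < ∑ i ∈ s, α i := fun s hs =>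
    Finset.sum_pos (fun i _ => hαpos i) hs
  have hWm : Measurable W := measurable_finset_sup' (Finset.range n) hne X hXmeas
  have hWlaw : ∀ x, μ {ω | W ω ≤ x} = ENNReal.ofReal (F x ^ (∑ i ∈ Finset.range n, α i)) := by
    intro x
    have hset : {ω | W ω ≤ x} = ⋂ i ∈ Finset.range n, X i ⁻¹' Set.Iic x := by
      ext ω
      simp only [Set.mem_setOf_eq, hWdef, Finset.sup'_le_iff, Set.mem_iInter, Set.mem_preimage,
        Set.mem_Iic]
    rw [hset, hindep.measure_inter_preimage_eq_mul (Finset.range n)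
      (fun i _ => measurableSet_Iic)]
    have hprod : ∀ i ∈ Finset.range n, μ (X i ⁻¹' Set.Iic x) = ENNReal.ofReal (F x ^ α i) :=
      fun i _ => hlaw i x
    rw [Finset.prod_congr rfl hprod,
      ← ENNReal.ofReal_prod_of_nonneg (fun i _ => Real.rpow_nonneg (hF0 x) _),
      ← rpow_finset_sum (hF0 x) _ _ (fun i _ => hαpos i)]
  -- independence of `X n` and `W`
  have hne' : (Finset.range n).attach.Nonempty := Finset.attach_nonempty_iff.mpr hne
  have hd1 : Disjoint ({n} : Finset ℕ) (Finset.range n) := by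
    simp [Finset.disjoint_left]
  set ψ1 : ({x // x ∈ Finset.range n} → ℝ) → ℝ :=
    fun g => (Finset.range n).attach.sup' hne' (fun i => g i) with hψ1
  have hψ1m : Measurable ψ1 :=
    measurable_finset_sup' (Finset.range n).attach hne' (fun i (g : {x // x ∈ Finset.range n} → ℝ) => g i)
      (fun i => measurable_pi_apply i)
  have h1 : ProbabilityTheory.IndepFun (X n) W μ := by
    have hcomp := (hindep.indepFun_finset {n} (Finset.range n) hd1 hXmeas).comp
      (φ := fun g : ({x // x ∈ ({n} : Finset ℕ)} → ℝ) => g ⟨n, Finset.mem_singleton_self n⟩)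
      (ψ := ψ1) (show Measurable fun g : ({x // x ∈ ({n} : Finset ℕ)} → ℝ) =>
        g ⟨n, Finset.mem_singleton_self n⟩ from measurable_pi_apply _) hψ1m
    have e2 : (ψ1 ∘ fun a (i : {x // x ∈ Finset.range n}) => X i a) = W := by
      funext a
      exact sup'_attach_eq (Finset.range n) hne hne' (fun i => X i a)
    rwa [e2] at hcomp
  -- independence of the pair `(X n, W)` and `X (n+1)`
  have hd2 : Disjoint (Finset.range (n + 1)) ({n + 1} : Finset ℕ) := by
    simp [Finset.disjoint_right]
  have hmemn : n ∈ Finset.range (n + 1) := Finset.self_mem_range_succ n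
  have hmemi : ∀ i : {x // x ∈ Finset.range n}, (i : ℕ) ∈ Finset.range (n + 1) := fun i =>
    Finset.mem_range.mpr (lt_trans (Finset.mem_range.mp i.2) (Nat.lt_succ_self n))
  set φ2 : ({x // x ∈ Finset.range (n + 1)} → ℝ) → ℝ × ℝ :=
    fun g => (g ⟨n, hmemn⟩,
      (Finset.range n).attach.sup' hne' (fun i => g ⟨i.1, hmemi i⟩)) with hφ2
  have hφ2m : Measurable φ2 := by
    apply Measurable.prodMk (measurable_pi_apply _)
    exact measurable_finset_sup' (Finset.range n).attach hne'
      (fun i (g : {x // x ∈ Finset.range (n + 1)} → ℝ) => g ⟨i.1, hmemi i⟩)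
      (fun i => measurable_pi_apply _)
  have h2 : ProbabilityTheory.IndepFun (fun ω => (X n ω, W ω)) (X (n + 1)) μ := by
    have hcomp := (hindep.indepFun_finset (Finset.range (n + 1)) {n + 1} hd2 hXmeas).comp
      (φ := φ2)
      (ψ := fun g : ({x // x ∈ ({n + 1} : Finset ℕ)} → ℝ) => g ⟨n + 1,
        Finset.mem_singleton_self (n + 1)⟩)
      hφ2m (show Measurable fun g : ({x // x ∈ ({n + 1} : Finset ℕ)} → ℝ) =>
        g ⟨n + 1, Finset.mem_singleton_self (n + 1)⟩ from measurable_pi_apply _)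
    have e2 : (φ2 ∘ fun a (i : {x // x ∈ Finset.range (n + 1)}) => X i a)
        = fun ω => (X n ω, W ω) := by
      funext a
      have : (Finset.range n).attach.sup' hne' (fun i => X i.1 a) = W a :=
        sup'_attach_eq (Finset.range n) hne hne' (fun i => X i a)
      simp only [Function.comp_apply, hφ2]
      exact congrArg (Prod.mk (X n a)) this
    rwa [e2] at hcomp
  rw [hevent, core μ F hFmono hFcont hFbot hFtop (α n) (∑ i ∈ Finset.range n, α i) (α (n + 1))
    (hαpos n) (hsum_pos _ hne) (hαpos (n + 1)) (X n) W (X (n + 1)) (hXmeas n) hWm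
    (hXmeas (n + 1)) (fun x => hlaw n x) hWlaw (fun x => hlaw (n + 1) x) h1 h2]
  congr 1
  rw [show n + 2 = (n + 1) + 1 from rfl, Finset.sum_range_succ (f := α) (n := n + 1),
    Finset.sum_range_succ (f := α) (n := n)]
  have hB : 0 < ∑ i ∈ Finset.range n, α i := hsum_pos _ hne
  have hn' : 0 < α n := hαpos n
  have hn1' : 0 < α (n + 1) := hαpos (n + 1)
  field_simp
  ring
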